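/- Let M ≥ (log 10)·10¹³ be a real number, set C := 1 − 0.005587/log M. Then (log(C·M)) · exp(0.005586/(log(C·M))²) < log M. -/

import Mathlib

set_option maxHeartbeats 800000


theorem stmt_16 (M : ℝ) (hM : M ≥ Real.log 10 * 10 ^ 13) :
    Real.log ((1 - 0.005587 / Real.log M) * M) *
        Real.exp (0.005586 / (Real.log ((1 - 0.005587 / Real.log M) * M)) ^ 2) <
      Real.log M := by
  have hlog10 : (2:ℝ) ≤ Real.log 10 := by
    have h1 : Real.exp 2 ≤ 10 := by
      have : Real.exp 2 = (Real.exp 1) ^ (2:ℕ) := by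
        rw [← Real.exp_nat_mul]; norm_num
      rw [this]
      calc (Real.exp 1:ℝ) ^ (2:ℕ) ≤ 2.7182818286 ^ (2:ℕ) := by
            apply pow_le_pow_left₀ (Real.exp_pos 1).le Real.exp_one_lt_d9.le
        _ ≤ 10 := by norm_num
    calc (2:ℝ) = Real.log (Real.exp 2) := (Real.log_exp 2).symm
      _ ≤ Real.log 10 := Real.log_le_log (Real.exp_pos 2) h1
  have hM2 : (2:ℝ) * 10 ^ 13 ≤ M := by nlinarith
  have hMpos : (0:ℝ) < M := by nlinarith
  have hL30 : (30:ℝ) ≤ Real.log M := by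
    have hexp30 : Real.exp 30 ≤ M := by
      have h1 : Real.exp 30 = (Real.exp 1) ^ (30:ℕ) := by
        rw [← Real.exp_nat_mul]; norm_num
      have h2 : (Real.exp 1:ℝ) ^ (30:ℕ) ≤ 2.7182818286 ^ (30:ℕ) :=
        pow_le_pow_left₀ (Real.exp_pos 1).le Real.exp_one_lt_d9.le 30
      have h3 : (2.7182818286:ℝ) ^ (30:ℕ) ≤ 2 * 10 ^ 13 := by norm_num
      linarith [h1 ▸ h2]
    calc (30:ℝ) = Real.log (Real.exp 30) := (Real.log_exp 30).symm
      _ ≤ Real.log M := Real.log_le_log (Real.exp_pos 30) hexp30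
  set L : ℝ := Real.log M with hLdef
  have hLpos : (0:ℝ) < L := by linarith
  set ε : ℝ := 0.005587 / L with hεdef
  have hεpos : 0 < ε := by positivity
  have hεle : ε ≤ 0.0001863 := by
    rw [hεdef, div_le_iff₀ hLpos]; nlinarith
  have hCpos : (0:ℝ) < 1 - ε := by linarith
  have hlogsplit : Real.log ((1 - ε) * M) = Real.log (1 - ε) + L := by
    rw [Real.log_mul (ne_of_gt hCpos) (ne_of_gt hMpos)]
  -- upper bound for log(1-ε)
  have hup : Real.log (1 - ε) ≤ -ε := by
    have := Real.log_le_sub_one_of_pos hCpos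
    linarith
  -- lower bound for log(1-ε)
  have hlow : -0.000187 ≤ Real.log (1 - ε) := by
    have h1 : Real.log (1 - ε)⁻¹ ≤ (1 - ε)⁻¹ - 1 :=
      Real.log_le_sub_one_of_pos (by positivity)
    have h2 : Real.log (1 - ε)⁻¹ = -Real.log (1 - ε) := Real.log_inv _
    have h3 : (1 - ε)⁻¹ - 1 = ε / (1 - ε) := by
      field_simp
      ring
    have h4 : ε / (1 - ε) ≤ 0.000187 := by
      rw [div_le_iff₀ hCpos]; nlinarith
    rw [h2, h3] at h1
    linarith
  set L' : ℝ := Real.log ((1 - ε) * M) with hL'def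
  have hub : L' ≤ L - ε := by rw [hlogsplit]; linarith
  have hlb : L - 0.000187 ≤ L' := by rw [hlogsplit]; linarith
  have hL'pos : (29:ℝ) ≤ L' := by linarith
  set δ : ℝ := 0.005586 / L' ^ 2 with hδdef
  have hδpos : 0 < δ := by positivity
  have hδsmall : δ ≤ 0.00001 := by
    rw [hδdef, div_le_iff₀ (by nlinarith : (0:ℝ) < L' ^ 2)]; nlinarith
  -- key: L * δ ≤ ε
  have hkey : L * δ ≤ ε := by
    rw [hδdef, hεdef]
    rw [show L * (0.005586 / L' ^ 2) = 0.005586 * L / L' ^ 2 by ring]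
    rw [div_le_div_iff₀ (by nlinarith : (0:ℝ) < L' ^ 2) hLpos]
    nlinarith [sq_nonneg (L - 0.000187)]
  have hL'L : L' ≤ L * (1 - δ) := by nlinarith
  -- exp bound
  have hexpδ : Real.exp δ * (1 - δ) < 1 := by
    have h1 : -δ + 1 < Real.exp (-δ) := Real.add_one_lt_exp (by linarith)
    have h2 : Real.exp (-δ) = (Real.exp δ)⁻¹ := Real.exp_neg δ
    rw [h2] at h1
    have h3 := Real.exp_pos δ
    calc Real.exp δ * (1 - δ) < Real.exp δ * (Real.exp δ)⁻¹ := by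
          apply mul_lt_mul_of_pos_left _ h3
          linarith
      _ = 1 := mul_inv_cancel₀ (ne_of_gt h3)
  show L' * Real.exp δ < L
  have h1δ : (0:ℝ) < 1 - δ := by linarith
  have hfinal : L' * (Real.exp δ * (1 - δ)) < L' * 1 :=
    mul_lt_mul_of_pos_left hexpδ (by linarith)
  have hstep : L' * Real.exp δ < L' / (1 - δ) := by
    rw [lt_div_iff₀ h1δ]; nlinarith
  have hstep2 : L' / (1 - δ) ≤ L := by
    rw [div_le_iff₀ h1δ]; nlinarith
  linarith
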